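/- For all n ≥ 1 and i, j ≥ 0, the coefficients c_{n,i,j} satisfy c_{2n,i,j} = (2i+2)c_{2n-1,i,j-1} + (2j+1)c_{2n-1,i-1,j} + (4n-2i-2j+1)c_{2n-1,i-1,j-1} and c_{2n+1,i,j} = (2i+2)c_{2n,i,j} + (2j+2)c_{2n,i-1,j+1} + (4n-2i-2j+2)c_{2n,i-1,j}. -/

import Mathlib

open MvPolynomial Finset

/-- The Dumont derivation on `ℚ[x,y,z]`: `D x = y*z`, `D y = x*z`, `D z = x*y`. -/
noncomputable def Dum : Derivation ℚ (MvPolynomial (Fin 3) ℚ) (MvPolynomial (Fin 3) ℚ) :=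
  MvPolynomial.mkDerivation ℚ ![X 1 * X 2, X 0 * X 2, X 0 * X 1]

/-- The operator `p ↦ D (x * p)`. -/
noncomputable def Dx : MvPolynomial (Fin 3) ℚ → MvPolynomial (Fin 3) ℚ :=
  fun p => Dum (X 0 * p)

/-- `cC n i j` is the coefficient `c_{n,i,j}` of `(Dx)^n(x)`:
for even `n`, the coefficient of `x^(2i+1) y^(2j) z^(2n-2i-2j)`;
for odd `n`, the coefficient of `x^(2i+1) y^(2j+1) z^(2n-1-2i-2j)`.
Coefficients with negative indices are `0`. -/
noncomputable def cC (n : ℕ) (i j : ℤ) : ℚ :=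
  if 0 ≤ i ∧ 0 ≤ j then
    MvPolynomial.coeff
      (Finsupp.single 0 (2*i+1).toNat
        + Finsupp.single 1 ((if Even n then 2*j else 2*j+1).toNat)
        + Finsupp.single 2 ((2*(n:ℤ) - 2*i - 2*j - if Even n then 0 else 1).toNat))
      (Dx^[n] (X 0))
  else 0


noncomputable def M (a b c : ℕ) : Fin 3 →₀ ℕ :=
  Finsupp.single 0 a + Finsupp.single 1 b + Finsupp.single 2 c

lemma M_apply0 (a b c : ℕ) : (M a b c) 0 = a := by simp [M, Finsupp.single_apply]
lemma M_apply1 (a b c : ℕ) : (M a b c) 1 = b := by simp [M, Finsupp.single_apply]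
lemma M_apply2 (a b c : ℕ) : (M a b c) 2 = c := by simp [M, Finsupp.single_apply]

lemma M_le_iff (a' b' c' a b c : ℕ) : M a' b' c' ≤ M a b c ↔ a' ≤ a ∧ b' ≤ b ∧ c' ≤ c := by
  rw [Finsupp.le_def]
  constructor
  · intro h
    exact ⟨by simpa [M_apply0] using h 0, by simpa [M_apply1] using h 1,
      by simpa [M_apply2] using h 2⟩
  · rintro ⟨h1, h2, h3⟩ i
    fin_cases i <;> simp [M_apply0, M_apply1, M_apply2, h1, h2, h3]

lemma M_sub (a b c a' b' c' : ℕ) : M a b c - M a' b' c' = M (a - a') (b - b') (c - c') := by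
  ext i
  fin_cases i <;> simp [Finsupp.sub_apply, M_apply0, M_apply1, M_apply2]

lemma M_add_single0 (a b c : ℕ) : M a b c + Finsupp.single 0 1 = M (a+1) b c := by
  ext i
  fin_cases i <;> simp [Finsupp.add_apply, Finsupp.single_apply, M_apply0, M_apply1, M_apply2]

lemma M_add_single1 (a b c : ℕ) : M a b c + Finsupp.single 1 1 = M a (b+1) c := by
  ext i
  fin_cases i <;> simp [Finsupp.add_apply, Finsupp.single_apply, M_apply0, M_apply1, M_apply2]

lemma M_add_single2 (a b c : ℕ) : M a b c + Finsupp.single 2 1 = M a b (c+1) := by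
  ext i
  fin_cases i <;> simp [Finsupp.add_apply, Finsupp.single_apply, M_apply0, M_apply1, M_apply2]

lemma M_eq_iff (a b c a' b' c' : ℕ) : M a b c = M a' b' c' ↔ a = a' ∧ b = b' ∧ c = c' := by
  constructor
  · intro h
    refine ⟨?_, ?_, ?_⟩
    · have := congrArg (fun f => f 0) h; simpa [M_apply0] using this
    · have := congrArg (fun f => f 1) h; simpa [M_apply1] using this
    · have := congrArg (fun f => f 2) h; simpa [M_apply2] using this
  · rintro ⟨rfl, rfl, rfl⟩; rfl

noncomputable def Dum2 : Derivation ℚ (MvPolynomial (Fin 3) ℚ) (MvPolynomial (Fin 3) ℚ) :=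
  ((X 1 * X 2 : MvPolynomial (Fin 3) ℚ)) • (pderiv (R := ℚ) (0 : Fin 3))
    + ((X 0 * X 2 : MvPolynomial (Fin 3) ℚ)) • (pderiv (R := ℚ) (1 : Fin 3))
    + ((X 0 * X 1 : MvPolynomial (Fin 3) ℚ)) • (pderiv (R := ℚ) (2 : Fin 3))

lemma Dum_eq_Dum2 : Dum = Dum2 := by
  apply MvPolynomial.derivation_ext
  intro i
  fin_cases i <;>
    simp [Dum, Dum2, mkDerivation_X, pderiv_X, Pi.single_apply] <;> ring

lemma Dum_apply (p : MvPolynomial (Fin 3) ℚ) :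
    Dum p = (X 1 * X 2) * pderiv 0 p + (X 0 * X 2) * pderiv 1 p + (X 0 * X 1) * pderiv 2 p := by
  rw [Dum_eq_Dum2]
  simp [Dum2, smul_eq_mul]

lemma Dx_apply (p : MvPolynomial (Fin 3) ℚ) :
    Dx p = (X 1 * X 2) * p + (X 0 * (X 1 * X 2)) * pderiv 0 p
      + (X 0 * (X 0 * X 2)) * pderiv 1 p + (X 0 * (X 0 * X 1)) * pderiv 2 p := by
  unfold Dx
  rw [Derivation.leibniz, smul_eq_mul, smul_eq_mul, Dum_apply]
  have h0 : Dum (X 0) = X 1 * X 2 := by simp [Dum, mkDerivation_X]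
  rw [h0]; ring

lemma coeff_pderiv (i : Fin 3) (m : Fin 3 →₀ ℕ) (p : MvPolynomial (Fin 3) ℚ) :
    coeff m (pderiv i p) = (m i + 1 : ℚ) * coeff (m + Finsupp.single i 1) p := by
  induction p using MvPolynomial.induction_on' with
  | add p q hp hq => simp [map_add, coeff_add, hp, hq, mul_add]
  | monomial s a =>
    rw [pderiv_monomial, coeff_monomial, coeff_monomial]
    by_cases h : s = m + Finsupp.single i 1
    · subst h
      have hsub : m + Finsupp.single i 1 - Finsupp.single i 1 = m := by
        ext j
        simp [Finsupp.sub_apply, Finsupp.add_apply, Finsupp.single_apply]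
      rw [if_pos hsub, if_pos rfl, Finsupp.add_apply, Finsupp.single_apply, if_pos rfl]
      push_cast; ring
    · rw [if_neg h, mul_zero]
      by_cases hsi : s i = 0
      · rw [hsi]; simp
      · rw [if_neg]
        intro hc
        apply h
        ext j
        have := congrArg (fun f => f j) hc
        simp only [Finsupp.sub_apply, Finsupp.add_apply, Finsupp.single_apply] at this ⊢
        by_cases hj : i = j
        · subst hj; simp at this ⊢; omega
        · simp [hj] at this ⊢; omega


lemma X_mul_eq_monomial_1 : (X 1 * X 2 : MvPolynomial (Fin 3) ℚ) = monomial (M 0 1 1) 1 := by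
  simp only [X, monomial_mul, one_mul]
  exact congrArg (fun s => monomial s (1:ℚ))
    (by ext i; fin_cases i <;>
      simp [Finsupp.add_apply, Finsupp.single_apply, M_apply0, M_apply1, M_apply2])

lemma X_mul_eq_monomial_2 : (X 0 * (X 1 * X 2) : MvPolynomial (Fin 3) ℚ) = monomial (M 1 1 1) 1 := by
  simp only [X, monomial_mul, one_mul]
  exact congrArg (fun s => monomial s (1:ℚ))
    (by ext i; fin_cases i <;>
      simp [Finsupp.add_apply, Finsupp.single_apply, M_apply0, M_apply1, M_apply2])

lemma X_mul_eq_monomial_3 : (X 0 * (X 0 * X 2) : MvPolynomial (Fin 3) ℚ) = monomial (M 2 0 1) 1 := by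
  simp only [X, monomial_mul, one_mul]
  exact congrArg (fun s => monomial s (1:ℚ))
    (by ext i; fin_cases i <;>
      simp [Finsupp.add_apply, Finsupp.single_apply, M_apply0, M_apply1, M_apply2])

lemma X_mul_eq_monomial_4 : (X 0 * (X 0 * X 1) : MvPolynomial (Fin 3) ℚ) = monomial (M 2 1 0) 1 := by
  simp only [X, monomial_mul, one_mul]
  exact congrArg (fun s => monomial s (1:ℚ))
    (by ext i; fin_cases i <;>
      simp [Finsupp.add_apply, Finsupp.single_apply, M_apply0, M_apply1, M_apply2])

lemma coeff_Dx (p : MvPolynomial (Fin 3) ℚ) (a b c : ℕ) :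
    coeff (M a b c) (Dx p) =
      (if 1 ≤ b ∧ 1 ≤ c then coeff (M a (b-1) (c-1)) p else 0)
      + (if 1 ≤ a ∧ 1 ≤ b ∧ 1 ≤ c then (a : ℚ) * coeff (M a (b-1) (c-1)) p else 0)
      + (if 2 ≤ a ∧ 1 ≤ c then ((b:ℚ)+1) * coeff (M (a-2) (b+1) (c-1)) p else 0)
      + (if 2 ≤ a ∧ 1 ≤ b then ((c:ℚ)+1) * coeff (M (a-2) (b-1) (c+1)) p else 0) := by
  rw [Dx_apply, X_mul_eq_monomial_2, X_mul_eq_monomial_3,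
    X_mul_eq_monomial_4, X_mul_eq_monomial_1, coeff_add, coeff_add, coeff_add,
    coeff_monomial_mul', coeff_monomial_mul', coeff_monomial_mul', coeff_monomial_mul']
  congr 1
  congr 1
  congr 1
  · -- term 1
    simp only [M_le_iff, M_sub]
    by_cases h : 1 ≤ b ∧ 1 ≤ c
    · rw [if_pos ⟨Nat.zero_le a, h.1, h.2⟩, if_pos h, one_mul]
      congr 1 <;> omega
    · rw [if_neg (by omega), if_neg h]
  · -- term 2
    simp only [M_le_iff, M_sub]
    by_cases h : 1 ≤ a ∧ 1 ≤ b ∧ 1 ≤ c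
    · rw [if_pos h, if_pos h, one_mul, coeff_pderiv, M_apply0, M_add_single0]
      have e : a - 1 + 1 = a := by omega
      rw [e]
      congr 1
      push_cast [Nat.cast_sub h.1]
      ring
    · rw [if_neg h, if_neg h]
  · -- term 3
    simp only [M_le_iff, M_sub]
    by_cases h : 2 ≤ a ∧ 1 ≤ c
    · rw [if_pos ⟨h.1, Nat.zero_le b, h.2⟩, if_pos h, one_mul, coeff_pderiv, M_apply1,
        M_add_single1]
      congr 1 <;> omega
    · rw [if_neg (by omega), if_neg h]
  · -- term 4
    simp only [M_le_iff, M_sub]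
    by_cases h : 2 ≤ a ∧ 1 ≤ b
    · rw [if_pos ⟨h.1, h.2, Nat.zero_le c⟩, if_pos h, one_mul, coeff_pderiv, M_apply2,
        M_add_single2]
      congr 1 <;> omega
    · rw [if_neg (by omega), if_neg h]

lemma deg_lemma : ∀ (n : ℕ) (a b c : ℕ),
    coeff (M a b c) (Dx^[n] (X 0)) ≠ 0 → a + b + c = 2*n + 1 := by
  intro n
  induction n with
  | zero =>
    intro a b c h
    rw [Function.iterate_zero, id_eq] at h
    rw [show (X 0 : MvPolynomial (Fin 3) ℚ) = monomial (M 1 0 0) 1 by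
      rw [X]
      exact congrArg (fun s => monomial s (1:ℚ))
        (by ext i; fin_cases i <;>
          simp [Finsupp.add_apply, Finsupp.single_apply, M_apply0, M_apply1, M_apply2]),
      coeff_monomial] at h
    by_cases he : M 1 0 0 = M a b c
    · rw [M_eq_iff] at he
      omega
    · rw [if_neg he] at h; exact absurd rfl h
  | succ n ih =>
    intro a b c h
    rw [Function.iterate_succ_apply', coeff_Dx] at h
    have h4 : (if 1 ≤ b ∧ 1 ≤ c then coeff (M a (b-1) (c-1)) (Dx^[n] (X 0)) else 0) ≠ 0
        ∨ (if 1 ≤ a ∧ 1 ≤ b ∧ 1 ≤ c then (a : ℚ) * coeff (M a (b-1) (c-1)) (Dx^[n] (X 0)) else 0) ≠ 0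
        ∨ (if 2 ≤ a ∧ 1 ≤ c then ((b:ℚ)+1) * coeff (M (a-2) (b+1) (c-1)) (Dx^[n] (X 0)) else 0) ≠ 0
        ∨ (if 2 ≤ a ∧ 1 ≤ b then ((c:ℚ)+1) * coeff (M (a-2) (b-1) (c+1)) (Dx^[n] (X 0)) else 0) ≠ 0 := by
      by_contra hc
      push_neg at hc
      rw [hc.1, hc.2.1, hc.2.2.1, hc.2.2.2] at h
      simp at h
    rcases h4 with h4 | h4 | h4 | h4 <;> rw [ne_eq, ite_eq_right_iff] at h4 <;> push_neg at h4
    · have := ih _ _ _ h4.2; have hg := h4.1; omega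
    · have := ih _ _ _ (by intro hz; exact h4.2 (by rw [hz, mul_zero]))
      have hg := h4.1; omega
    · have := ih _ _ _ (by intro hz; exact h4.2 (by rw [hz, mul_zero]))
      have hg := h4.1; omega
    · have := ih _ _ _ (by intro hz; exact h4.2 (by rw [hz, mul_zero]))
      have hg := h4.1; omega

noncomputable def co (n : ℕ) (a b c : ℤ) : ℚ :=
  if 0 ≤ a ∧ 0 ≤ b ∧ 0 ≤ c then coeff (M a.toNat b.toNat c.toNat) (Dx^[n] (X 0)) else 0

lemma co_natCast (n : ℕ) (A B C : ℕ) :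
    co n (A:ℤ) (B:ℤ) (C:ℤ) = coeff (M A B C) (Dx^[n] (X 0)) := by
  rw [co, if_pos ⟨Int.natCast_nonneg A, Int.natCast_nonneg B, Int.natCast_nonneg C⟩]
  simp

lemma co_neg (n : ℕ) (a b c : ℤ) (h : ¬(0 ≤ a ∧ 0 ≤ b ∧ 0 ≤ c)) : co n a b c = 0 :=
  if_neg h

lemma co_rec (n : ℕ) (a b c : ℤ) (ha : 0 ≤ a) (hb : 0 ≤ b) :
    co (n+1) a b c = ((a:ℚ)+1) * co n a (b-1) (c-1) + ((b:ℚ)+1) * co n (a-2) (b+1) (c-1)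
      + ((c:ℚ)+1) * co n (a-2) (b-1) (c+1) := by
  rcases lt_or_ge c 0 with hc | hc
  · rw [co_neg (n+1) _ _ _ (by omega), co_neg n a (b-1) (c-1) (by omega),
      co_neg n (a-2) (b+1) (c-1) (by omega)]
    rcases eq_or_lt_of_le (Int.lt_iff_add_one_le.mp hc) with hc1 | hc1
    · have : ((c:ℚ)+1) = 0 := by
        have : c = -1 := by omega
        rw [this]; norm_num
      rw [this]; ring
    · rw [co_neg n (a-2) (b-1) (c+1) (by omega)]; ring
  obtain ⟨A, rfl⟩ := Int.eq_ofNat_of_zero_le ha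
  obtain ⟨B, rfl⟩ := Int.eq_ofNat_of_zero_le hb
  obtain ⟨C, rfl⟩ := Int.eq_ofNat_of_zero_le hc
  rw [co_natCast, Function.iterate_succ_apply', coeff_Dx]
  have t1 : (if 1 ≤ B ∧ 1 ≤ C then coeff (M A (B-1) (C-1)) (Dx^[n] (X 0)) else 0)
      + (if 1 ≤ A ∧ 1 ≤ B ∧ 1 ≤ C then (A:ℚ) * coeff (M A (B-1) (C-1)) (Dx^[n] (X 0)) else 0)
      = (((A:ℤ):ℚ)+1) * co n (A:ℤ) ((B:ℤ)-1) ((C:ℤ)-1) := by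
    by_cases h : 1 ≤ B ∧ 1 ≤ C
    · have e1 : ((B:ℤ))-1 = ((B-1:ℕ):ℤ) := by omega
      have e2 : ((C:ℤ))-1 = ((C-1:ℕ):ℤ) := by omega
      rw [e1, e2, co_natCast, if_pos h]
      by_cases hA : 1 ≤ A
      · rw [if_pos ⟨hA, h.1, h.2⟩]; push_cast; ring
      · have : A = 0 := by omega
        subst this
        rw [if_neg (by omega)]; push_cast; ring
    · rw [if_neg h, if_neg (by tauto), co_neg n _ _ _ (by omega)]; ring
  have t2 : (if 2 ≤ A ∧ 1 ≤ C then ((B:ℚ)+1) * coeff (M (A-2) (B+1) (C-1)) (Dx^[n] (X 0)) else 0)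
      = (((B:ℤ):ℚ)+1) * co n ((A:ℤ)-2) ((B:ℤ)+1) ((C:ℤ)-1) := by
    by_cases h : 2 ≤ A ∧ 1 ≤ C
    · have e1 : ((A:ℤ))-2 = ((A-2:ℕ):ℤ) := by omega
      have e2 : ((B:ℤ))+1 = ((B+1:ℕ):ℤ) := by omega
      have e3 : ((C:ℤ))-1 = ((C-1:ℕ):ℤ) := by omega
      rw [e1, e2, e3, co_natCast, if_pos h]; push_cast; ring
    · rw [if_neg h, co_neg n _ _ _ (by omega)]; ring
  have t3 : (if 2 ≤ A ∧ 1 ≤ B then ((C:ℚ)+1) * coeff (M (A-2) (B-1) (C+1)) (Dx^[n] (X 0)) else 0)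
      = (((C:ℤ):ℚ)+1) * co n ((A:ℤ)-2) ((B:ℤ)-1) ((C:ℤ)+1) := by
    by_cases h : 2 ≤ A ∧ 1 ≤ B
    · have e1 : ((A:ℤ))-2 = ((A-2:ℕ):ℤ) := by omega
      have e2 : ((B:ℤ))-1 = ((B-1:ℕ):ℤ) := by omega
      have e3 : ((C:ℤ))+1 = ((C+1:ℕ):ℤ) := by omega
      rw [e1, e2, e3, co_natCast, if_pos h]; push_cast; ring
    · rw [if_neg h, co_neg n _ _ _ (by omega)]; ring
  linear_combination t1 + t2 + t3

lemma cC_eq_co (n : ℕ) (i j : ℤ) :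
    cC n i j = co n (2*i+1) (2*j + (if Even n then (0:ℤ) else 1))
      (2*(n:ℤ) - 2*i - 2*j - (if Even n then (0:ℤ) else 1)) := by
  rcases Classical.em (Even n) with he | he <;>
  · simp only [cC, co, he, if_true, if_false, ite_true, ite_false]
    by_cases hij : 0 ≤ i ∧ 0 ≤ j
    · rw [if_pos hij]
      by_cases hz : 0 ≤ 2*(n:ℤ) - 2*i - 2*j - (if Even n then (0:ℤ) else 1)
      · rw [if_pos ⟨by omega, by omega, by simp only [he, ite_true, ite_false] at hz ⊢; omega⟩]
        first
        | rfl
        | (congr 1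
           ext k
           fin_cases k <;>
             simp [M, Finsupp.add_apply, Finsupp.single_apply, he] <;> omega)
      · rw [if_neg (by simp only [he, ite_true, ite_false] at hz ⊢; omega)]
        by_contra hne
        have hd := deg_lemma n _ _ _ hne
        simp only [he, ite_true, ite_false] at hz hd
        omega
    · rw [if_neg hij, if_neg (by omega)]

theorem stmt4 (n : ℕ) (hn : 1 ≤ n) (i j : ℤ) (hi : 0 ≤ i) (hj : 0 ≤ j) :
    cC (2*n) i j =
      (2*(i:ℚ)+2) * cC (2*n-1) i (j-1) + (2*(j:ℚ)+1) * cC (2*n-1) (i-1) j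
        + (4*(n:ℚ)-2*(i:ℚ)-2*(j:ℚ)+1) * cC (2*n-1) (i-1) (j-1) ∧
    cC (2*n+1) i j =
      (2*(i:ℚ)+2) * cC (2*n) i j + (2*(j:ℚ)+2) * cC (2*n) (i-1) (j+1)
        + (4*(n:ℚ)-2*(i:ℚ)-2*(j:ℚ)+2) * cC (2*n) (i-1) j := by
  constructor
  · obtain ⟨mm, hm⟩ : ∃ m, 2*n = m + 1 := ⟨2*n-1, by omega⟩
    have hm2 : 2*n - 1 = mm := by omega
    have hoddm : ¬ Even mm := by rw [Nat.even_iff]; omega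
    have heA : Even (mm+1) := by rw [Nat.even_iff]; rw [Nat.even_iff] at hoddm; omega
    rw [hm2, hm, cC_eq_co, cC_eq_co, cC_eq_co, cC_eq_co]
    simp only [heA, hoddm, if_true, if_false, ite_true, ite_false]
    rw [co_rec mm _ _ _ (by omega) (by omega)]
    have hzz : ((mm:ℕ):ℤ) = 2*(n:ℤ)-1 := by omega
    rw [hzz]
    have hq : ((mm+1:ℕ):ℤ) = 2*(n:ℤ) := by omega
    rw [hq]
    push_cast
    ring_nf
  · have hodd : ¬ Even (2*n+1) := by rw [Nat.even_iff]; omega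
    have hev : Even (2*n) := by rw [Nat.even_iff]; omega
    rw [cC_eq_co, cC_eq_co, cC_eq_co, cC_eq_co]
    simp only [hodd, hev, if_true, if_false, ite_true, ite_false]
    rw [co_rec (2*n) _ _ _ (by omega) (by omega)]
    push_cast
    ring_nf
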